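/- arXiv:2303.14338 — 2 statements merged into one kernel-verified Lean document; each statement's English description precedes it below -/
import Mathlib

section
/- In any cartesian closed category, if L is an object equipped with, for each pair of objects A, B, a morphism ev : L × A → B such that every morphism f : A → B factors as f = ev ∘ ⟨⌜f⌝ ∘ !, id⟩ for some point ⌜f⌝ : 1 → L, and additionally every morphism g : L × A → B has a code, then every such g has a fixpoint: a point Γ : 1 → L with g ∘ ⟨Γ ∘ !, id⟩ = ev ∘ ⟨Γ ∘ !, id⟩ (assuming a specializer s : L × 1 → L satisfying the specialization equation). -/
open CategoryTheory MonoidalCategory CartesianMonoidalCategory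

/-- Diagonalization from universality and specialization: in a cartesian closed
category, an object `L` with universal interpreters `ev A B : L × A ⟶ B`
(every `f : A ⟶ B` has a point-code, and every `g : L × A ⟶ B` has a code)
and specializers yields a fixpoint point `Γ` for every `g : L × A ⟶ B`. -/
theorem stmt_0 {C : Type*} [Category C] [CartesianMonoidalCategory C] [MonoidalClosed C]
    (L : C) (ev : ∀ A B : C, L ⊗ A ⟶ B)
    (huniv : ∀ (A B : C) (f : A ⟶ B), ∃ code : 𝟙_ C ⟶ L,
      f = lift (toUnit A ≫ code) (𝟙 A) ≫ ev A B)
    (hcode : ∀ (A B : C) (g : L ⊗ A ⟶ B), ∃ G : 𝟙_ C ⟶ L,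
      g = lift (toUnit (L ⊗ A) ≫ G) (𝟙 (L ⊗ A)) ≫ ev (L ⊗ A) B)
    (hspec : ∀ X A B : C, ∃ s : L ⊗ X ⟶ L,
      (s ⊗ₘ 𝟙 A) ≫ ev A B = (α_ L X A).hom ≫ ev (X ⊗ A) B) :
    ∀ (A B : C) (g : L ⊗ A ⟶ B), ∃ Γ : 𝟙_ C ⟶ L,
      lift (toUnit A ≫ Γ) (𝟙 A) ≫ g = lift (toUnit A ≫ Γ) (𝟙 A) ≫ ev A B := by
  intro A B g
  obtain ⟨s, hs⟩ := hspec L A B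
  -- self-application morphism h(p,a) = g(s(p,p),a)
  obtain ⟨G, hG⟩ := hcode A B (((lift (𝟙 L) (𝟙 L) ≫ s) ⊗ₘ 𝟙 A) ≫ g)
  refine ⟨lift G G ≫ s, ?_⟩
  have hGG : G ≫ lift (𝟙 L) (𝟙 L) = lift G G := by simp
  have e1 : lift (toUnit A ≫ G) (𝟙 A) ≫ ((lift (𝟙 L) (𝟙 L) ≫ s) ⊗ₘ 𝟙 A)
      = lift (toUnit A ≫ lift G G ≫ s) (𝟙 A) := by
    apply hom_ext <;> simp [reassoc_of% hGG]
    rw [← comp_lift, Category.assoc]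
  have e2 : lift (toUnit A ≫ lift G G) (𝟙 A) ≫ (α_ L L A).hom
      = lift (toUnit A ≫ G) (𝟙 A) ≫ lift (toUnit (L ⊗ A) ≫ G) (𝟙 (L ⊗ A)) := by
    apply hom_ext
    · simp
    · apply hom_ext <;> simp
  have e3 : lift (toUnit A ≫ lift G G ≫ s) (𝟙 A)
      = lift (toUnit A ≫ lift G G) (𝟙 A) ≫ (s ⊗ₘ 𝟙 A) := by
    apply hom_ext
    · simp
      rw [← comp_lift, Category.assoc]
    · simp
  calc lift (toUnit A ≫ lift G G ≫ s) (𝟙 A) ≫ g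
      = lift (toUnit A ≫ G) (𝟙 A) ≫ (((lift (𝟙 L) (𝟙 L) ≫ s) ⊗ₘ 𝟙 A) ≫ g) := by
        rw [← e1, Category.assoc]
    _ = lift (toUnit A ≫ G) (𝟙 A) ≫
        (lift (toUnit (L ⊗ A) ≫ G) (𝟙 (L ⊗ A)) ≫ ev (L ⊗ A) B) := by rw [← hG]
    _ = lift (toUnit A ≫ lift G G ≫ s) (𝟙 A) ≫ ev A B := by
        rw [e3, Category.assoc, hs, reassoc_of% e2]
end

section
/- Lawvere's fixed point theorem: in a cartesian closed category, if there exists a point-surjective morphism φ : A → (A ⇒ B) (i.e., for every f : A → B there is a point a : 1 → A with φ(a) = ⌜f⌝ as an element of A ⇒ B), then every endomorphism t : B → B has a fixed point, i.e., a point b : 1 → B with t ∘ b = b. -/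
open CategoryTheory MonoidalCategory CartesianMonoidalCategory CartesianClosed

/-- Lawvere's fixed point theorem: if `φ : A ⟶ (A ⟹ B)` is point-surjective in
a cartesian closed category, then every endomorphism of `B` has a fixed point. -/
theorem stmt_1 {C : Type*} [Category C] [CartesianMonoidalCategory C] [MonoidalClosed C]
    {A B : C} (φ : A ⟶ (A ⟹ B))
    (hsurj : ∀ f : A ⟶ B, ∃ a : 𝟙_ C ⟶ A,
      lift (𝟙 A) (toUnit A ≫ a ≫ φ) ≫ (ihom.ev A).app B = f) :
    ∀ t : B ⟶ B, ∃ b : 𝟙_ C ⟶ B, b ≫ t = b := by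
  intro t
  obtain ⟨a, ha⟩ := hsurj (lift (𝟙 A) φ ≫ (ihom.ev A).app B ≫ t)
  refine ⟨a ≫ lift (𝟙 A) φ ≫ (ihom.ev A).app B, ?_⟩
  have key : a ≫ lift (𝟙 A) (toUnit A ≫ a ≫ φ) = a ≫ lift (𝟙 A) φ := by
    rw [comp_lift, comp_lift, Category.comp_id, ← Category.assoc,
      toUnit_unique (a ≫ toUnit A) (𝟙 _), Category.id_comp]
  conv_lhs => rw [Category.assoc, Category.assoc, ← ha, ← Category.assoc, key, Category.assoc]
end
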